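/- arXiv:1912.11719 — 3 statements merged into one kernel-verified Lean document; each statement's English description precedes it below -/
import Mathlib

section
/- Let 0 < λ ≤ 1 and let a2, a3 be complex numbers with |a2| ≤ 1 + λ and |a3| ≤ 1 + λ + λ^2. Then 2·Re(a2^2·conj(a3)) - 2|a2|^2 - |a3|^2 + 1 ≤ max(1, λ^2(1+λ)(3+λ)). -/
theorem stmt_7 (lam : ℝ) (hl : 0 < lam) (hl1 : lam ≤ 1) (a2 a3 : ℂ)
    (h2 : ‖a2‖ ≤ 1 + lam) (h3 : ‖a3‖ ≤ 1 + lam + lam^2) :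
    2 * (a2^2 * (starRingEnd ℂ) a3).re - 2*(‖a2‖)^2 - (‖a3‖)^2 + 1
      ≤ max 1 (lam^2*(1+lam)*(3+lam)) := by
  set u := ‖a2‖ with hu
  set v := ‖a3‖ with hv
  have hun : 0 ≤ u := norm_nonneg a2
  have hvn : 0 ≤ v := norm_nonneg a3
  have hre : (a2^2 * (starRingEnd ℂ) a3).re ≤ u^2 * v := by
    calc (a2^2 * (starRingEnd ℂ) a3).re ≤ ‖a2^2 * (starRingEnd ℂ) a3‖ :=
          Complex.re_le_norm _
      _ = u^2 * v := by
          rw [norm_mul, norm_pow, Complex.norm_conj]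
  rcases le_or_gt v 1 with hv1 | hv1
  · refine le_trans ?_ (le_max_left _ _)
    nlinarith [sq_nonneg u, sq_nonneg (u*(1-v))]
  · refine le_trans ?_ (le_max_right _ _)
    nlinarith [sq_nonneg u, mul_nonneg hun hvn, sq_nonneg (v - (1+lam)^2),
      mul_le_mul h2 h2 hun (by linarith : (0:ℝ) ≤ 1+lam),
      mul_nonneg (mul_nonneg hun hun) (le_of_lt (lt_trans one_pos hv1))]
end

section
/- Let a2, a3 be complex numbers with |a3 - a2^2| ≤ (1 - |a2|^2)/3. Then 2·Re(a2^2·conj(a3)) - 2|a2|^2 - |a3|^2 + 1 ≥ (8/9)·(1 - |a2|^2)^2 ≥ 0. -/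
theorem stmt_9 (a2 a3 : ℂ) (h : ‖a3 - a2^2‖ ≤ (1 - (‖a2‖)^2)/3) :
    2 * (a2^2 * (starRingEnd ℂ) a3).re - 2*(‖a2‖)^2 - (‖a3‖)^2 + 1
      ≥ (8/9)*(1 - (‖a2‖)^2)^2 ∧ (8/9)*(1 - (‖a2‖)^2)^2 ≥ 0 := by
  have key : (‖a3 - a2^2‖)^2
      = (‖a3‖)^2 - 2*(a2^2 * (starRingEnd ℂ) a3).re + ((‖a2‖)^2)^2 := by
    simp only [Complex.sq_norm, ← map_pow Complex.normSq]
    simp [Complex.normSq_apply, Complex.mul_re, Complex.mul_im, Complex.sub_re, Complex.sub_im,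
      Complex.conj_re, Complex.conj_im, pow_two]
    ring
  have hd : (0:ℝ) ≤ ‖a3 - a2^2‖ := norm_nonneg _
  constructor
  · nlinarith [sq_nonneg (‖a3 - a2^2‖), sq_nonneg (1 - (‖a2‖)^2)]
  · nlinarith
end

section
/- Let a2, a3 be complex numbers with |a2| ≤ 1/2 and |a3 - a2^2| ≤ 1/4. Then 2·Re(a2^2·conj(a3)) - 2|a2|^2 - |a3|^2 + 1 ≥ (1 - |a2|^2)^2 - 1/16 ≥ 1/2. -/
theorem stmt_11 (a2 a3 : ℂ) (h2 : ‖a2‖ ≤ 1/2)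
    (h : ‖a3 - a2^2‖ ≤ 1/4) :
    2 * (a2^2 * (starRingEnd ℂ) a3).re - 2*(‖a2‖)^2 - (‖a3‖)^2 + 1
      ≥ (1 - (‖a2‖)^2)^2 - 1/16 ∧ (1 - (‖a2‖)^2)^2 - 1/16 ≥ 1/2 := by
  have key : (‖a3 - a2^2‖)^2
      = (‖a3‖)^2 + ((‖a2‖)^2)^2 - 2 * (a2^2 * (starRingEnd ℂ) a3).re := by
    rw [Complex.sq_norm, Complex.normSq_sub, Complex.sq_norm, ← Complex.sq_norm (a2^2),
      norm_pow, ← pow_mul, pow_mul, Complex.sq_norm]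
    have : (a3 * (starRingEnd ℂ) (a2^2)).re = (a2^2 * (starRingEnd ℂ) a3).re := by
      simp only [pow_two, Complex.mul_re, Complex.mul_im, Complex.conj_re, Complex.conj_im]; ring
    rw [this]
  have hd : (‖a3 - a2^2‖)^2 ≤ (1/4)^2 := by
    have := norm_nonneg (a3 - a2^2)
    nlinarith
  have hx : (‖a2‖)^2 ≤ (1/2)^2 := by
    have := norm_nonneg a2
    nlinarith
  constructor
  · nlinarith [hd, key]
  · nlinarith [hx, sq_nonneg (‖a2‖)]
end
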